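/- If W : ℝ^d → H_m is locally integrable, non-negative, and there exist ℓ₀, δ, c > 0 such that for every cube Q of side length ≤ ℓ₀, the set {x ∈ Q : W(x) ≥ (δ/|Q|)∫_Q W} has Lebesgue measure ≥ c|Q|, then for every cube Q of side length ≤ ℓ₀ and every measurable A ⊆ Q with |A| ≥ (1 − c/2)|Q|, one has ∫_A W ≥ (cδ/2)∫_Q W (the matrix inequality meaning inequality of the associated quadratic forms). -/

import Mathlib

open scoped ComplexOrder
open MeasureTheory

/-- The axis-parallel cube in `ℝ^d` with lower corner `x` and side length `ℓ`. -/
def Cube {d : ℕ} (x : Fin d → ℝ) (ℓ : ℝ) : Set (Fin d → ℝ) :=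
  {y | ∀ i, y i ∈ Set.Icc (x i) (x i + ℓ)}

/-- The entrywise integral of a matrix-valued function over a set. -/
noncomputable def matInt {d m : ℕ} (E : Set (Fin d → ℝ))
    (W : (Fin d → ℝ) → Matrix (Fin m) (Fin m) ℂ) : Matrix (Fin m) (Fin m) ℂ :=
  Matrix.of fun i j => ∫ y in E, W y i j

lemma quadAux {m : ℕ} (B : Matrix (Fin m) (Fin m) ℂ) (v : Fin m → ℂ) :
    dotProduct (star v) (B.mulVec v) = ∑ i, ∑ j, star (v i) * B i j * v j := by
  simp [dotProduct, Matrix.mulVec, Finset.mul_sum, mul_assoc]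

lemma quadMatInt {d m : ℕ} (E : Set (Fin d → ℝ))
    (W : (Fin d → ℝ) → Matrix (Fin m) (Fin m) ℂ) (v : Fin m → ℂ)
    (h : ∀ i j, IntegrableOn (fun y => W y i j) E volume) :
    dotProduct (star v) ((matInt E W).mulVec v)
      = ∫ y in E, dotProduct (star v) ((W y).mulVec v) := by
  have h1 : ∀ i j, IntegrableOn (fun y => star (v i) * W y i j * v j) E volume :=
    fun i j => ((h i j).const_mul _).mul_const _
  simp_rw [quadAux]
  symm
  calc ∫ y in E, ∑ i, ∑ j, star (v i) * W y i j * v j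
      = ∑ i, ∫ y in E, ∑ j, star (v i) * W y i j * v j :=
        integral_finset_sum _ (fun i _ => integrable_finset_sum _ fun j _ => h1 i j)
    _ = ∑ i, ∑ j, ∫ y in E, star (v i) * W y i j * v j :=
        Finset.sum_congr rfl fun i _ => integral_finset_sum _ fun j _ => h1 i j
    _ = ∑ i, ∑ j, star (v i) * (matInt E W) i j * v j := by
        refine Finset.sum_congr rfl fun i _ => Finset.sum_congr rfl fun j _ => ?_
        rw [integral_mul_const, integral_const_mul]
        rfl

lemma matIntHerm {d m : ℕ} (E : Set (Fin d → ℝ))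
    (W : (Fin d → ℝ) → Matrix (Fin m) (Fin m) ℂ) (h : ∀ y, (W y).IsHermitian) :
    (matInt E W).IsHermitian := by
  rw [Matrix.IsHermitian.ext_iff]
  intro i j
  show star (∫ y in E, W y j i) = ∫ y in E, W y i j
  rw [RCLike.star_def, ← integral_conj]
  refine integral_congr_ae (Filter.Eventually.of_forall fun y => ?_)
  rw [← RCLike.star_def]
  exact (h y).apply i j

lemma hermSmulReal {m : ℕ} (r : ℝ) (M : Matrix (Fin m) (Fin m) ℂ) (h : M.IsHermitian) :
    (r • M).IsHermitian := by
  rw [Matrix.IsHermitian.ext_iff] at h ⊢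
  intro i j
  rw [Matrix.smul_apply, Matrix.smul_apply, star_smul, star_trivial, h]

lemma hermQuadStar {m : ℕ} (B : Matrix (Fin m) (Fin m) ℂ) (hB : B.IsHermitian) (v : Fin m → ℂ) :
    (starRingEnd ℂ) (dotProduct (star v) (B.mulVec v))
      = dotProduct (star v) (B.mulVec v) := by
  rw [← RCLike.star_def, ← Matrix.star_dotProduct_star, star_star, Matrix.star_mulVec,
    ← Matrix.dotProduct_mulVec, hB.eq]

theorem stmt_5 {d m : ℕ} (W : (Fin d → ℝ) → Matrix (Fin m) (Fin m) ℂ)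
    (hloc : ∀ i j, LocallyIntegrable (fun y => W y i j) volume)
    (hpos : ∀ y, (W y).PosSemidef)
    (ℓ₀ δ c : ℝ) (hℓ₀ : 0 < ℓ₀) (hδ : 0 < δ) (hc : 0 < c)
    (hAinf : ∀ (x : Fin d → ℝ) (ℓ : ℝ), 0 < ℓ → ℓ ≤ ℓ₀ →
      ENNReal.ofReal c * volume (Cube x ℓ) ≤
        volume {y ∈ Cube x ℓ | (W y - (δ / ℓ ^ d) • matInt (Cube x ℓ) W).PosSemidef}) :
    ∀ (x : Fin d → ℝ) (ℓ : ℝ), 0 < ℓ → ℓ ≤ ℓ₀ →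
      ∀ A : Set (Fin d → ℝ), MeasurableSet A → A ⊆ Cube x ℓ →
        ENNReal.ofReal (1 - c / 2) * volume (Cube x ℓ) ≤ volume A →
          (matInt A W - (c * δ / 2 : ℝ) • matInt (Cube x ℓ) W).PosSemidef := by
  intro x ℓ hℓ hℓℓ₀ A hA hAQ hAvol
  classical
  set Q : Set (Fin d → ℝ) := Cube x ℓ with hQdef
  have hQpi : Q = Set.univ.pi fun i => Set.Icc (x i) (x i + ℓ) := by
    ext y; simp [hQdef, Cube, Set.mem_pi, Pi.le_def, forall_and]
  have hQm : MeasurableSet Q := by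
    rw [hQpi]; exact MeasurableSet.univ_pi fun i => measurableSet_Icc
  have hQc : IsCompact Q := by
    rw [hQpi]; exact isCompact_univ_pi fun i => isCompact_Icc
  have hQvol : volume Q = ENNReal.ofReal ℓ ^ d := by
    rw [hQpi, volume_pi_pi]
    simp [Real.volume_Icc]
  have hQtop : volume Q ≠ ⊤ := by
    rw [hQvol]; exact ENNReal.pow_ne_top ENNReal.ofReal_ne_top
  have hQpos : volume Q ≠ 0 := by
    rw [hQvol]
    exact pow_ne_zero _ (by simpa using hℓ)
  have hld : (0:ℝ) < ℓ ^ d := pow_pos hℓ d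
  have hQtoReal : (volume Q).toReal = ℓ ^ d := by
    rw [hQvol, ← ENNReal.ofReal_pow hℓ.le, ENNReal.toReal_ofReal hld.le]
  have hIQ : ∀ i j, IntegrableOn (fun y => W y i j) Q volume :=
    fun i j => (hloc i j).integrableOn_isCompact hQc
  set sc : ℝ := δ / ℓ ^ d with hsc
  set M : Matrix (Fin m) (Fin m) ℂ := matInt Q W with hMdef
  have hMherm : M.IsHermitian := matIntHerm _ _ fun y => (hpos y).1
  set S : Set (Fin d → ℝ) := {y ∈ Q | (W y - sc • M).PosSemidef} with hSdef
  have hS : ENNReal.ofReal c * volume Q ≤ volume S := hAinf x ℓ hℓ hℓℓ₀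
  have hc1 : c ≤ 1 := by
    have h2 : volume S ≤ volume Q := measure_mono fun y hy => hy.1
    have h3 : ENNReal.ofReal c * volume Q ≤ 1 * volume Q := by
      simpa using hS.trans h2
    have h4 : ENNReal.ofReal c ≤ 1 := (ENNReal.mul_le_mul_iff_left hQpos hQtop).mp h3
    simpa using ENNReal.ofReal_le_one.mp h4
  -- measurable representatives
  have hmsr : ∀ i j, AEStronglyMeasurable (fun y => W y i j) volume :=
    fun i j => (hloc i j).aestronglyMeasurable
  set g : Fin m → Fin m → (Fin d → ℝ) → ℂ := fun i j => (hmsr i j).mk _ with hgdef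
  have hgm : ∀ i j, Measurable (g i j) :=
    fun i j => (hmsr i j).stronglyMeasurable_mk.measurable
  have hae : ∀ᵐ y ∂(volume : Measure (Fin d → ℝ)), ∀ i j, W y i j = g i j y := by
    rw [ae_all_iff]; intro i; rw [ae_all_iff]; intro j; exact (hmsr i j).ae_eq_mk
  set N : Set (Fin d → ℝ) := {y | ¬ ∀ i j, W y i j = g i j y} with hNdef
  have hNnull : volume N = 0 := hae
  have hWG : ∀ y ∉ N, W y = Matrix.of fun i j => g i j y := by
    intro y hy
    have h := not_not.mp hy
    exact Matrix.ext fun i j => h i j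
  set F : (Fin m → ℂ) → (Fin d → ℝ) → ℂ := fun v y =>
    dotProduct (star v) (((Matrix.of fun i j => g i j y) - sc • M).mulVec v) with hFdef
  have hFmeas : ∀ v, Measurable (F v) := by
    intro v
    have hFeq : F v = fun y => ∑ i, ∑ j, star (v i) * ((g i j y) - (sc • M) i j) * v j := by
      funext y
      show dotProduct (star v) (((Matrix.of fun i j => g i j y) - sc • M).mulVec v) = _
      exact quadAux _ v
    rw [hFeq]
    refine Finset.measurable_sum _ fun i _ => Finset.measurable_sum _ fun j _ => ?_
    exact (((hgm i j).sub measurable_const).const_mul _).mul_const _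
  obtain ⟨D, hDc, hDd⟩ := TopologicalSpace.exists_countable_dense (Fin m → ℂ)
  set Sg : Set (Fin d → ℝ) :=
    Q ∩ ⋂ v ∈ D, ({y | 0 ≤ (F v y).re} ∩ {y | (F v y).im = 0}) with hSgdef
  have hSgm : MeasurableSet Sg := by
    refine hQm.inter (MeasurableSet.biInter hDc fun v _ => MeasurableSet.inter ?_ ?_)
    · exact measurableSet_le measurable_const (Complex.measurable_re.comp (hFmeas v))
    · exact (Complex.measurable_im.comp (hFmeas v)) (measurableSet_singleton 0)
  have hSsub : S ⊆ Sg ∪ N := by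
    intro y hy
    by_cases hyN : y ∈ N
    · exact Or.inr hyN
    refine Or.inl ⟨hy.1, ?_⟩
    refine Set.mem_biInter fun v hv => ?_
    have hq : 0 ≤ F v y := by
      show (0:ℂ) ≤ dotProduct (star v) (((Matrix.of fun i j => g i j y) - sc • M).mulVec v)
      rw [← hWG y hyN]
      exact hy.2.dotProduct_mulVec_nonneg v
    exact ⟨(Complex.nonneg_iff.mp hq).1, ((Complex.nonneg_iff.mp hq).2).symm⟩
  have hSgS : ∀ y ∈ Sg, y ∉ N → (W y - sc • M).PosSemidef := by
    intro y hySg hyN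
    have hWy : (Matrix.of fun i j => g i j y) = W y := (hWG y hyN).symm
    have hherm : (W y - sc • M).IsHermitian := (hpos y).1.sub (hermSmulReal _ _ hMherm)
    refine Matrix.PosSemidef.of_dotProduct_mulVec_nonneg hherm fun v => ?_
    have hFW : ∀ u : Fin m → ℂ, F u y = dotProduct (star u) ((W y - sc • M).mulVec u) := by
      intro u
      show dotProduct (star u) (((Matrix.of fun i j => g i j y) - sc • M).mulVec u) = _
      rw [hWy]
    have hcont : Continuous fun u : Fin m → ℂ =>
        (dotProduct (star u) ((W y - sc • M).mulVec u)).re := by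
      have : (fun u : Fin m → ℂ => dotProduct (star u) ((W y - sc • M).mulVec u))
          = fun u => ∑ i, ∑ j, star (u i) * (W y - sc • M) i j * u j :=
        funext fun u => quadAux _ u
      refine Complex.continuous_re.comp ?_
      rw [this]
      refine continuous_finset_sum _ fun i _ => continuous_finset_sum _ fun j _ => ?_
      exact (((continuous_apply i).star.mul continuous_const).mul (continuous_apply j))
    have hD0 : D ⊆ {u : Fin m → ℂ |
        0 ≤ (dotProduct (star u) ((W y - sc • M).mulVec u)).re} := by
      intro u hu
      have h2 := hySg.2
      rw [Set.mem_iInter₂] at h2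
      have h3 := (h2 u hu).1
      rw [Set.mem_setOf_eq, hFW u] at h3
      exact h3
    have hall : v ∈ {u : Fin m → ℂ |
        0 ≤ (dotProduct (star u) ((W y - sc • M).mulVec u)).re} := by
      have hclosed : IsClosed {u : Fin m → ℂ |
          0 ≤ (dotProduct (star u) ((W y - sc • M).mulVec u)).re} :=
        isClosed_le continuous_const hcont
      have h5 : closure D ⊆ _ := hclosed.closure_subset_iff.mpr hD0
      rw [hDd.closure_eq] at h5
      exact h5 (Set.mem_univ v)
    have him : (dotProduct (star v) ((W y - sc • M).mulVec v)).im = 0 :=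
      Complex.conj_eq_iff_im.mp (hermQuadStar _ hherm v)
    exact Complex.nonneg_iff.mpr ⟨hall, him.symm⟩
  -- measure estimates
  set T : Set (Fin d → ℝ) := Sg ∩ A with hTdef
  have hvolSg : ENNReal.ofReal c * volume Q ≤ volume Sg := by
    calc ENNReal.ofReal c * volume Q ≤ volume S := hS
      _ ≤ volume (Sg ∪ N) := measure_mono hSsub
      _ ≤ volume Sg + volume N := measure_union_le _ _
      _ = volume Sg := by rw [hNnull, add_zero]
  have hofReal : ENNReal.ofReal c + ENNReal.ofReal (1 - c/2)
      = 1 + ENNReal.ofReal (c/2) := by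
    rw [← ENNReal.ofReal_add hc.le (by linarith), ← ENNReal.ofReal_one,
      ← ENNReal.ofReal_add zero_le_one (by positivity)]
    congr 1
    ring
  have hTvol : ENNReal.ofReal (c/2) * volume Q ≤ volume T := by
    have h1 : volume (Sg ∪ A) + volume T = volume Sg + volume A :=
      measure_union_add_inter Sg hA
    have h2 : volume (Sg ∪ A) ≤ volume Q :=
      measure_mono (Set.union_subset (fun y hy => hy.1) hAQ)
    have h4 : volume Q + ENNReal.ofReal (c/2) * volume Q ≤ volume Q + volume T := by
      calc volume Q + ENNReal.ofReal (c/2) * volume Q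
          = (1 + ENNReal.ofReal (c/2)) * volume Q := by rw [add_mul, one_mul]
        _ = (ENNReal.ofReal c + ENNReal.ofReal (1 - c/2)) * volume Q := by rw [hofReal]
        _ = ENNReal.ofReal c * volume Q + ENNReal.ofReal (1 - c/2) * volume Q := add_mul _ _ _
        _ ≤ volume Sg + volume A := add_le_add hvolSg hAvol
        _ = volume (Sg ∪ A) + volume T := h1.symm
        _ ≤ volume Q + volume T := add_le_add_left h2 _
    exact (ENNReal.add_le_add_iff_left hQtop).mp h4
  set T' : Set (Fin d → ℝ) := T \ toMeasurable volume N with hT'def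
  have hT'm : MeasurableSet T' := (hSgm.inter hA).diff (measurableSet_toMeasurable _ _)
  have hT'vol : volume T' = volume T :=
    measure_diff_null (by rw [measure_toMeasurable]; exact hNnull)
  have hT'Q : T' ⊆ Q := fun y hy => hy.1.1.1
  have hT'A : T' ⊆ A := fun y hy => hy.1.2
  have hT'PSD : ∀ y ∈ T', (W y - sc • M).PosSemidef := fun y hy =>
    hSgS y hy.1.1 fun hN => hy.2 (subset_toMeasurable _ _ hN)
  have hT'top : volume T' ≠ ⊤ := ne_top_of_le_ne_top hQtop (measure_mono hT'Q)
  have hT'toReal : c/2 * ℓ^d ≤ (volume T').toReal := by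
    have h5 : ENNReal.ofReal (c/2) * volume Q ≤ volume T' := by
      rw [hT'vol]; exact hTvol
    have h6 := ENNReal.toReal_mono hT'top h5
    rwa [ENNReal.toReal_mul, ENNReal.toReal_ofReal (by positivity), hQtoReal] at h6
  -- conclusion
  refine Matrix.PosSemidef.of_dotProduct_mulVec_nonneg ((matIntHerm _ _ fun y => (hpos y).1).sub (hermSmulReal _ _ hMherm)) fun v => ?_
  have hIA : ∀ i j, IntegrableOn (fun y => W y i j) A volume :=
    fun i j => (hIQ i j).mono_set hAQ
  set φ : (Fin d → ℝ) → ℂ := fun y => dotProduct (star v) ((W y).mulVec v) with hφdef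
  have hφsum : φ = fun y => ∑ i, ∑ j, star (v i) * W y i j * v j :=
    funext fun y => quadAux _ v
  have hφQ : IntegrableOn φ Q volume := by
    rw [hφsum]
    exact integrable_finset_sum _ fun i _ => integrable_finset_sum _ fun j _ =>
      ((hIQ i j).const_mul _).mul_const _
  have hφA : IntegrableOn φ A volume := hφQ.mono_set hAQ
  have hφT' : IntegrableOn φ T' volume := hφQ.mono_set hT'Q
  set f : (Fin d → ℝ) → ℝ := fun y => RCLike.re (φ y) with hfdef
  have hfQ : IntegrableOn f Q volume := hφQ.re
  have hfA : IntegrableOn f A volume := hfQ.mono_set hAQ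
  have hfT' : IntegrableOn f T' volume := hfQ.mono_set hT'Q
  have hf0 : ∀ y, 0 ≤ f y := fun y => (RCLike.nonneg_iff.mp ((hpos y).dotProduct_mulVec_nonneg v)).1
  have hKQ : dotProduct (star v) (M.mulVec v) = ∫ y in Q, φ y := quadMatInt Q W v hIQ
  have hKA : dotProduct (star v) ((matInt A W).mulVec v) = ∫ y in A, φ y :=
    quadMatInt A W v hIA
  have hreQ : RCLike.re (∫ y in Q, φ y) = ∫ y in Q, f y := (integral_re hφQ).symm
  have hQf0 : 0 ≤ ∫ y in Q, f y := integral_nonneg fun y => hf0 y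
  have hconst : ∀ y ∈ T', sc * ∫ z in Q, f z ≤ f y := by
    intro y hy
    have hP := (RCLike.nonneg_iff.mp ((hT'PSD y hy).dotProduct_mulVec_nonneg v)).1
    have hexp : dotProduct (star v) ((W y - sc • M).mulVec v)
        = φ y - sc • dotProduct (star v) (M.mulVec v) := by
      rw [Matrix.sub_mulVec, dotProduct_sub, Matrix.smul_mulVec,
        dotProduct_smul]
    rw [hexp, map_sub, RCLike.smul_re, hKQ, hreQ] at hP
    linarith
  have hint1 : sc * (∫ z in Q, f z) * (volume T').toReal ≤ ∫ y in T', f y :=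
    by have h := setIntegral_ge_of_const_le hT'm hT'top hconst hfT'; rw [smul_eq_mul, measureReal_def, mul_comm] at h; exact h
  have hint2 : ∫ y in T', f y ≤ ∫ y in A, f y :=
    setIntegral_mono_set hfA (Filter.Eventually.of_forall fun y => hf0 y)
      (HasSubset.Subset.eventuallyLE hT'A)
  have hscnn : 0 ≤ sc * ∫ z in Q, f z := mul_nonneg (by positivity) hQf0
  have h4 : c * δ / 2 * ∫ z in Q, f z ≤ ∫ y in A, f y := by
    have h5 : sc * (∫ z in Q, f z) * (c/2 * ℓ^d) ≤ sc * (∫ z in Q, f z) * (volume T').toReal :=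
      mul_le_mul_of_nonneg_left hT'toReal hscnn
    have heq : sc * (∫ z in Q, f z) * (c/2 * ℓ^d) = c * δ / 2 * ∫ z in Q, f z := by
      rw [hsc]
      field_simp
    linarith
  have hexp2 : dotProduct (star v) ((matInt A W - (c * δ / 2 : ℝ) • M).mulVec v)
      = (∫ y in A, φ y) - (c * δ / 2 : ℝ) • (∫ y in Q, φ y) := by
    rw [Matrix.sub_mulVec, dotProduct_sub, Matrix.smul_mulVec,
      dotProduct_smul, hKA, hKQ]
  have himφ : ∀ y, RCLike.im (φ y) = 0 := fun y =>
    RCLike.conj_eq_iff_im.mp (hermQuadStar _ (hpos y).1 v)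
  have himA : RCLike.im (∫ y in A, φ y) = 0 := by
    rw [← integral_im hφA]
    simp [himφ]
  have himQ2 : RCLike.im (∫ y in Q, φ y) = 0 := by
    rw [← integral_im hφQ]
    simp [himφ]
  rw [hexp2, RCLike.nonneg_iff]
  constructor
  · rw [map_sub, RCLike.smul_re, hreQ, ← integral_re hφA]
    linarith
  · rw [map_sub, RCLike.smul_im, himA, himQ2]
    simp
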